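/- Let α ∈ ℝ and let ξ₁, ξ₂, μ₁, μ₂ ∈ ℝ with ξ₁ ≠ 0, ξ₂ ≠ 0, ξ₁ + ξ₂ ≠ 0. If (μ₁/ξ₁ − μ₂/ξ₂)² ≤ (1/2) (ξ₁+ξ₂)² |5(ξ₁² + ξ₁ξ₂ + ξ₂²) − 3α|, then |R(ξ₁,ξ₂,μ₁,μ₂)| ≥ (1/2) |ξ₁| |ξ₂| |ξ₁+ξ₂| · |5(ξ₁² + ξ₁ξ₂ + ξ₂²) − 3α|. -/

import Mathlib

/-- The dispersion relation of the fifth order KP-I equation with parameter `α`: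
`ω(ξ,μ) = ξ⁵ − αξ³ + μ²/ξ` (for `ξ ≠ 0`). -/
noncomputable def omega5 (α ξ μ : ℝ) : ℝ := ξ ^ 5 - α * ξ ^ 3 + μ ^ 2 / ξ

/-- The resonance function of the fifth order KP-I equation:
`R(ξ₁,ξ₂,μ₁,μ₂) = ω(ξ₁+ξ₂,μ₁+μ₂) − ω(ξ₁,μ₁) − ω(ξ₂,μ₂)`. -/
noncomputable def resonance5 (α ξ₁ ξ₂ μ₁ μ₂ : ℝ) : ℝ :=
  omega5 α (ξ₁ + ξ₂) (μ₁ + μ₂) - omega5 α ξ₁ μ₁ - omega5 α ξ₂ μ₂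

/-- Lower bound for the resonance function of the fifth order KP-I equation
in the non-resonant regime. -/
theorem resonance5_lower_bound (α ξ₁ ξ₂ μ₁ μ₂ : ℝ)
    (h₁ : ξ₁ ≠ 0) (h₂ : ξ₂ ≠ 0) (h₁₂ : ξ₁ + ξ₂ ≠ 0)
    (hres : (μ₁ / ξ₁ - μ₂ / ξ₂) ^ 2 ≤
      (1 / 2) * (ξ₁ + ξ₂) ^ 2 * |5 * (ξ₁ ^ 2 + ξ₁ * ξ₂ + ξ₂ ^ 2) - 3 * α|) :
    (1 / 2) * |ξ₁| * |ξ₂| * |ξ₁ + ξ₂| * |5 * (ξ₁ ^ 2 + ξ₁ * ξ₂ + ξ₂ ^ 2) - 3 * α|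
      ≤ |resonance5 α ξ₁ ξ₂ μ₁ μ₂| := by
  set B : ℝ := 5 * (ξ₁ ^ 2 + ξ₁ * ξ₂ + ξ₂ ^ 2) - 3 * α with hB
  set d : ℝ := μ₁ / ξ₁ - μ₂ / ξ₂ with hd
  have key : resonance5 α ξ₁ ξ₂ μ₁ μ₂
      = ξ₁ * ξ₂ * (ξ₁ + ξ₂) * B - (ξ₁ * ξ₂ / (ξ₁ + ξ₂)) * d ^ 2 := by
    simp only [resonance5, omega5, hB, hd]
    field_simp
    ring
  have h2 : |(ξ₁ * ξ₂ / (ξ₁ + ξ₂)) * d ^ 2|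
      ≤ (1 / 2) * |ξ₁| * |ξ₂| * |ξ₁ + ξ₂| * |B| := by
    rw [abs_mul, abs_div, abs_mul, abs_pow, sq_abs]
    have hpos : (0:ℝ) < |ξ₁ + ξ₂| := abs_pos.mpr h₁₂
    rw [div_mul_eq_mul_div, div_le_iff₀ hpos]
    calc |ξ₁| * |ξ₂| * d ^ 2
        ≤ |ξ₁| * |ξ₂| * ((1 / 2) * (ξ₁ + ξ₂) ^ 2 * |B|) := by
          apply mul_le_mul_of_nonneg_left hres (by positivity)
      _ = 1 / 2 * |ξ₁| * |ξ₂| * |ξ₁ + ξ₂| * |B| * |ξ₁ + ξ₂| := by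
          rw [← sq_abs (ξ₁ + ξ₂)]; ring
  have h3 : |ξ₁ * ξ₂ * (ξ₁ + ξ₂) * B| = |ξ₁| * |ξ₂| * |ξ₁ + ξ₂| * |B| := by
    rw [abs_mul, abs_mul, abs_mul]
  have := abs_sub_abs_le_abs_sub (ξ₁ * ξ₂ * (ξ₁ + ξ₂) * B)
    ((ξ₁ * ξ₂ / (ξ₁ + ξ₂)) * d ^ 2)
  rw [key]
  linarith
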